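/- Let h be a rational number with h^3 − h ≠ 0, and let (X, Y) be a rational point satisfying Y^2 = X^3 − 3·h^2·X^2 + 3·h·(h^3 − h)·X − (h^3 − h)^2. Define p = X/(h^3 − h), m = Y/(h^3 − h), q = h·p − 1, and set A = m − q, B = m + p, C = m + q, D = m − p. Then A^4 + h·B^4 = C^4 + h·D^4 and A + C = B + D. -/

import Mathlib

/-- From a rational point `(X, Y)` on the cubic
`Y^2 = X^3 - 3*h^2*X^2 + 3*h*(h^3 - h)*X - (h^3 - h)^2` (with `h^3 - h ≠ 0`), setting
`p = X/(h^3 - h)`, `m = Y/(h^3 - h)`, `q = h*p - 1` and `A = m - q`, `B = m + p`,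
`C = m + q`, `D = m - p`, one gets `A^4 + h*B^4 = C^4 + h*D^4` and `A + C = B + D`. -/
theorem cubic_point_gives_quartic_solution (h X Y : ℚ) (hne : h ^ 3 - h ≠ 0)
    (hXY : Y ^ 2 = X ^ 3 - 3 * h ^ 2 * X ^ 2 + 3 * h * (h ^ 3 - h) * X - (h ^ 3 - h) ^ 2)
    (p m q A B C D : ℚ)
    (hp : p = X / (h ^ 3 - h)) (hm : m = Y / (h ^ 3 - h)) (hq : q = h * p - 1)
    (hA : A = m - q) (hB : B = m + p) (hC : C = m + q) (hD : D = m - p) :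
    A ^ 4 + h * B ^ 4 = C ^ 4 + h * D ^ 4 ∧ A + C = B + D := by
  have hp' : p * (h ^ 3 - h) = X := by rw [hp]; exact div_mul_cancel₀ X hne
  have hm' : m * (h ^ 3 - h) = Y := by rw [hm]; exact div_mul_cancel₀ Y hne
  have hd3 : (h ^ 3 - h) ^ 3 ≠ 0 := pow_ne_zero _ hne
  have key : m ^ 2 = q ^ 3 - h * p ^ 3 := by
    refine mul_left_cancel₀ hd3 ?_
    subst hq
    linear_combination (h ^ 3 - h) * hXY +
      (h ^ 3 - h) * ((h ^ 3 - h) * m + Y) * hm' +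
      (-(h ^ 3 - h) * (((h ^ 3 - h) * p) ^ 2 + (h ^ 3 - h) * p * X + X ^ 2) +
        3 * h ^ 2 * (h ^ 3 - h) * ((h ^ 3 - h) * p + X) - 3 * h * (h ^ 3 - h) ^ 2) * hp'
  constructor
  · subst hq hA hB hC hD
    linear_combination (8 * m) * key
  · subst hq hA hB hC hD
    ring
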